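/- Suppose T is unbounded from above and from below (i.e., a_1 = −∞ and b_K = ∞). Then for every α ∈ (0,1) and every w ∈ T, (U(w) − L(w))/ς ≤ 2·Φ^{−1}(1 − p_* α/2). -/

import Mathlib

open Filter MeasureTheory ProbabilityTheory Set Real

/-- The cdf of the normal distribution with mean `θ` and variance `ς²`, truncated to the
set `T`: `F^T_{θ,ς²}(w) = P(V ≤ w ∧ V ∈ T) / P(V ∈ T)` for `V ~ N(θ, ς²)`. -/
noncomputable def truncNormalCDF (ς : ℝ) (T : Set ℝ) (θ w : ℝ) : ℝ :=
  ((gaussianReal θ (Real.toNNReal (ς ^ 2))) (Set.Iic w ∩ T)).toReal /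
    ((gaussianReal θ (Real.toNNReal (ς ^ 2))) T).toReal

/-- The standard normal cumulative distribution function. -/
noncomputable def stdNormalCDF (x : ℝ) : ℝ :=
  ∫ t in Set.Iic x, (Real.sqrt (2 * Real.pi))⁻¹ * Real.exp (-(t ^ 2) / 2)

/-- The inverse `Φ^{−1}` of the standard normal cdf on `(0,1)`. -/
noncomputable def stdNormalCDFInv (p : ℝ) : ℝ :=
  Function.invFun stdNormalCDF p

lemma pdf_eq : (fun t : ℝ => (Real.sqrt (2 * Real.pi))⁻¹ * Real.exp (-(t ^ 2) / 2))
    = gaussianPDFReal 0 1 := by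
  funext t
  simp [gaussianPDFReal]

lemma pdf_integrable : Integrable (fun t : ℝ => (Real.sqrt (2 * Real.pi))⁻¹ * Real.exp (-(t ^ 2) / 2)) := by
  rw [pdf_eq]; exact integrable_gaussianPDFReal 0 1

lemma pdf_pos (t : ℝ) : 0 < (Real.sqrt (2 * Real.pi))⁻¹ * Real.exp (-(t ^ 2) / 2) := by
  have := Real.pi_pos
  positivity

lemma pdf_total : ∫ t : ℝ, (Real.sqrt (2 * Real.pi))⁻¹ * Real.exp (-(t ^ 2) / 2) = 1 := by
  rw [pdf_eq]; exact integral_gaussianPDFReal_eq_one 0 one_ne_zero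

lemma stdNormalCDF_eq_measure (x : ℝ) :
    stdNormalCDF x = ((gaussianReal 0 1) (Iic x)).toReal := by
  rw [gaussianReal_apply_eq_integral 0 one_ne_zero, ENNReal.toReal_ofReal
    (setIntegral_nonneg measurableSet_Iic fun t _ => gaussianPDFReal_nonneg 0 1 t)]
  rw [stdNormalCDF, pdf_eq]

lemma stdNormalCDF_strictMono : StrictMono stdNormalCDF := by
  intro x y hxy
  set f : ℝ → ℝ := fun t => (Real.sqrt (2 * Real.pi))⁻¹ * Real.exp (-(t ^ 2) / 2) with hf
  have hint : ∀ s : Set ℝ, IntegrableOn f s := fun s => pdf_integrable.integrableOn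
  have hsplit : stdNormalCDF y = stdNormalCDF x + ∫ t in Ioc x y, f t := by
    rw [stdNormalCDF, stdNormalCDF, ← setIntegral_union (Iic_disjoint_Ioc le_rfl)
      measurableSet_Ioc (hint _) (hint _), Iic_union_Ioc_eq_Iic hxy.le]
  have hpos : 0 < ∫ t in Ioc x y, f t := by
    rw [setIntegral_pos_iff_support_of_nonneg_ae
      (ae_of_all _ fun t => (pdf_pos t).le) (hint _)]
    have hsupp : Function.support f = univ := eq_univ_of_forall fun t => (pdf_pos t).ne'
    rw [hsupp, univ_inter, Real.volume_Ioc]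
    simpa using hxy
  rw [hsplit]; linarith [hpos]

lemma stdNormalCDF_continuous : Continuous stdNormalCDF := by
  set f : ℝ → ℝ := fun t => (Real.sqrt (2 * Real.pi))⁻¹ * Real.exp (-(t ^ 2) / 2) with hf
  have hint : ∀ a b : ℝ, IntervalIntegrable f volume a b :=
    fun a b => pdf_integrable.intervalIntegrable
  have key : ∀ x : ℝ, stdNormalCDF x = stdNormalCDF 0 + ∫ t in (0:ℝ)..x, f t := by
    intro x
    have := intervalIntegral.integral_Iic_sub_Iic
      (pdf_integrable.integrableOn (s := Iic (0:ℝ)))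
      (pdf_integrable.integrableOn (s := Iic x)) (a := 0) (b := x) (f := f) (μ := volume)
    rw [stdNormalCDF, stdNormalCDF]
    linarith [this]
  have : Continuous fun x => stdNormalCDF 0 + ∫ t in (0:ℝ)..x, f t :=
    continuous_const.add (intervalIntegral.continuous_primitive hint 0)
  exact this.congr fun x => (key x).symm

lemma stdNormalCDF_symm (x : ℝ) : stdNormalCDF (-x) = 1 - stdNormalCDF x := by
  set f : ℝ → ℝ := fun t => (Real.sqrt (2 * Real.pi))⁻¹ * Real.exp (-(t ^ 2) / 2) with hf
  have heven : ∀ t : ℝ, f (-t) = f t := fun t => by simp [hf]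
  have h1 : stdNormalCDF (-x) = ∫ t in Ici x, f t := by
    rw [stdNormalCDF]
    calc ∫ t in Iic (-x), f t = ∫ t in Iic (-x), f (-t) := by
          exact setIntegral_congr_fun measurableSet_Iic fun t _ => (heven t).symm
      _ = ∫ t in Ici x, f t := by
          rw [integral_comp_neg_Iic]
          norm_num
          exact setIntegral_congr_set Ioi_ae_eq_Ici
  have h2 : (∫ t in Iio x, f t) + ∫ t in Ici x, f t = 1 := by
    rw [← setIntegral_union (Iio_disjoint_Ici le_rfl) measurableSet_Ici
      pdf_integrable.integrableOn pdf_integrable.integrableOn, Iio_union_Ici,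
      setIntegral_univ, pdf_total]
  have h3 : (∫ t in Iio x, f t) = stdNormalCDF x := by
    rw [stdNormalCDF]; exact setIntegral_congr_set Iio_ae_eq_Iic
  rw [h1]; linarith

lemma stdNormalCDF_tendsto_atTop : Tendsto stdNormalCDF atTop (nhds 1) := by
  have h := tendsto_measure_Iic_atTop (μ := gaussianReal 0 1)
  have h2 : Tendsto (fun x => ((gaussianReal 0 1) (Iic x)).toReal) atTop (nhds 1) := by
    have := (ENNReal.tendsto_toReal (by simp : (gaussianReal 0 1) univ ≠ ⊤)).comp h
    simpa [Function.comp_def] using this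
  exact h2.congr fun x => (stdNormalCDF_eq_measure x).symm

lemma stdNormalCDF_surj {p : ℝ} (hp : p ∈ Set.Ioo (0:ℝ) 1) : ∃ c, stdNormalCDF c = p := by
  have hm : max p (1 - p) < 1 := by
    rcases hp with ⟨h0, h1⟩
    exact max_lt h1 (by linarith)
  obtain ⟨x₂, hx₂⟩ := (stdNormalCDF_tendsto_atTop.eventually
    (eventually_gt_nhds hm)).exists
  have hx₂p : p < stdNormalCDF x₂ := lt_of_le_of_lt (le_max_left _ _) hx₂
  have hx₁ : stdNormalCDF (-x₂) < p := by
    have := lt_of_le_of_lt (le_max_right p (1 - p)) hx₂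
    rw [stdNormalCDF_symm]; linarith
  have hle : -x₂ ≤ x₂ := by
    by_contra h
    push_neg at h
    have := stdNormalCDF_strictMono h
    linarith
  obtain ⟨c, _, hc⟩ := intermediate_value_Icc hle
    stdNormalCDF_continuous.continuousOn ⟨hx₁.le, hx₂p.le⟩
  exact ⟨c, hc⟩

lemma stdNormalCDF_pos (x : ℝ) : 0 < stdNormalCDF x := by
  rw [stdNormalCDF]
  rw [setIntegral_pos_iff_support_of_nonneg_ae
    (ae_of_all _ fun t => (pdf_pos t).le) pdf_integrable.integrableOn]
  have hsupp : Function.support (fun t : ℝ => (Real.sqrt (2 * Real.pi))⁻¹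
      * Real.exp (-(t ^ 2) / 2)) = univ := eq_univ_of_forall fun t => (pdf_pos t).ne'
  rw [hsupp, univ_inter]
  simp [Real.volume_Iic]


lemma gauss_decomp {ς : ℝ} (hς : 0 < ς) (θ : ℝ) :
    gaussianReal θ (Real.toNNReal (ς ^ 2)) =
      ((gaussianReal 0 1).map (ς * ·)).map (· + θ) := by
  rw [gaussianReal_map_const_mul, gaussianReal_map_add_const]
  congr 1
  · ring
  · ext
    simp [Real.coe_toNNReal _ (sq_nonneg ς)]

lemma gauss_Iic {ς : ℝ} (hς : 0 < ς) (θ x : ℝ) :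
    ((gaussianReal θ (Real.toNNReal (ς ^ 2))) (Iic x)).toReal
      = stdNormalCDF ((x - θ) / ς) := by
  rw [gauss_decomp hς θ, Measure.map_apply (measurable_id'.add_const θ) measurableSet_Iic]
  have h1 : (· + θ) ⁻¹' Iic x = Iic (x - θ) := by
    ext y; simp [le_sub_iff_add_le]
  rw [h1, Measure.map_apply (measurable_id'.const_mul ς) measurableSet_Iic]
  have h2 : (ς * ·) ⁻¹' Iic (x - θ) = Iic ((x - θ) / ς) := by
    ext y; simp [le_div_iff₀ hς, mul_comm]
  rw [h2, stdNormalCDF_eq_measure]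

lemma gauss_Ioi {ς : ℝ} (hς : 0 < ς) (θ x : ℝ) :
    ((gaussianReal θ (Real.toNNReal (ς ^ 2))) (Ioi x)).toReal
      = stdNormalCDF ((θ - x) / ς) := by
  have h : Ioi x = (Iic x)ᶜ := by simp
  rw [h, measure_compl measurableSet_Iic (measure_ne_top _ _), measure_univ,
    ENNReal.toReal_sub_of_le prob_le_one ENNReal.one_ne_top, ENNReal.toReal_one,
    gauss_Iic hς, ← stdNormalCDF_symm]
  congr 1
  ring

lemma ereal_tricho (x : EReal) : x = ⊥ ∨ x = ⊤ ∨ ∃ r : ℝ, x = (r : EReal) := by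
  induction x using EReal.rec
  · exact Or.inl rfl
  · exact Or.inr (Or.inr ⟨_, rfl⟩)
  · exact Or.inr (Or.inl rfl)

lemma exists_lb {ς : ℝ} (hς : 0 < ς) (K : ℕ) (hK : 1 ≤ K) (a b : ℕ → EReal)
    (hab : ∀ i < K, a i < b i) (T : Set ℝ)
    (hT : T = ⋃ i ∈ Finset.range K, {x : ℝ | a i < (x : EReal) ∧ (x : EReal) < b i})
    (ha1 : a 0 = ⊥) (hbK : b (K - 1) = ⊤) :
    ∃ m : ℝ, 0 < m ∧ ∀ θ : ℝ,
      m ≤ ((gaussianReal θ (Real.toNNReal (ς ^ 2))) T).toReal := by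
  have hS0 : {x : ℝ | a 0 < (x : EReal) ∧ (x : EReal) < b 0} ⊆ T := by
    intro x hx
    rw [hT]
    exact mem_iUnion₂.mpr ⟨0, Finset.mem_range.mpr (by omega), hx⟩
  have hSK : {x : ℝ | a (K - 1) < (x : EReal) ∧ (x : EReal) < b (K - 1)} ⊆ T := by
    intro x hx
    rw [hT]
    exact mem_iUnion₂.mpr ⟨K - 1, Finset.mem_range.mpr (by omega), hx⟩
  have huniv : T = univ → ∃ m : ℝ, 0 < m ∧ ∀ θ : ℝ,
      m ≤ ((gaussianReal θ (Real.toNNReal (ς ^ 2))) T).toReal := by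
    intro h
    refine ⟨1, one_pos, fun θ => ?_⟩
    rw [h, measure_univ]
    simp
  rcases ereal_tricho (b 0) with hb0 | hb0 | ⟨c, hb0⟩
  · exact absurd (hab 0 (by omega)) (by rw [ha1, hb0]; exact lt_irrefl _)
  · refine huniv (univ_subset_iff.mp fun x _ => hS0 ⟨?_, ?_⟩)
    · rw [ha1]; exact EReal.bot_lt_coe x
    · rw [hb0]; exact EReal.coe_lt_top x
  rcases ereal_tricho (a (K - 1)) with haK | haK | ⟨d, haK⟩
  · refine huniv (univ_subset_iff.mp fun x _ => hSK ⟨?_, ?_⟩)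
    · rw [haK]; exact EReal.bot_lt_coe x
    · rw [hbK]; exact EReal.coe_lt_top x
  · exact absurd (hab (K - 1) (by omega)) (by rw [haK, hbK]; exact lt_irrefl _)
  have hIio : Iio c ⊆ T := fun x hx => hS0 ⟨by rw [ha1]; exact EReal.bot_lt_coe x,
    by rw [hb0]; exact_mod_cast hx⟩
  have hIoi : Ioi d ⊆ T := fun x hx => hSK ⟨by rw [haK]; exact_mod_cast hx,
    by rw [hbK]; exact EReal.coe_lt_top x⟩
  refine ⟨stdNormalCDF ((c - 1 - d) / (2 * ς)), stdNormalCDF_pos _, fun θ => ?_⟩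
  by_cases hθ : θ ≤ (c - 1 + d) / 2
  · have hsub : Iic (c - 1) ⊆ T := fun x hx => hIio (by simp only [mem_Iic] at hx; simp only [mem_Iio]; linarith)
    have hmono := ENNReal.toReal_mono (measure_ne_top _ T)
      (measure_mono (μ := gaussianReal θ (Real.toNNReal (ς ^ 2))) hsub)
    rw [gauss_Iic hς] at hmono
    refine le_trans (stdNormalCDF_strictMono.monotone ?_) hmono
    rw [div_le_div_iff₀ (by positivity) hς]
    nlinarith
  · push_neg at hθ
    have hmono := ENNReal.toReal_mono (measure_ne_top _ T)
      (measure_mono (μ := gaussianReal θ (Real.toNNReal (ς ^ 2))) hIoi)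
    rw [gauss_Ioi hς] at hmono
    refine le_trans (stdNormalCDF_strictMono.monotone ?_) hmono
    rw [div_le_div_iff₀ (by positivity) hς]
    nlinarith

/-- Suppose `T` is unbounded from above and from below (`a_1 = −∞` and `b_K = ∞`).
Then for every `α ∈ (0,1)` and every `w ∈ T`,
`(U(w) − L(w))/ς ≤ 2·Φ^{−1}(1 − p_* α/2)`, where `L(w) = Q_{1−α/2}(w)`,
`U(w) = Q_{α/2}(w)` and `p_* = inf_{ϑ} P(N(ϑ,ς²) ∈ T)`. -/
theorem stmt_12
    (ς : ℝ) (hς : 0 < ς) (K : ℕ) (hK : 1 ≤ K) (a b : ℕ → EReal)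
    (hab : ∀ i < K, a i < b i) (hba : ∀ i, i + 1 < K → b i < a (i + 1))
    (T : Set ℝ)
    (hT : T = ⋃ i ∈ Finset.range K, {x : ℝ | a i < (x : EReal) ∧ (x : EReal) < b i})
    (ha1 : a 0 = ⊥) (hbK : b (K - 1) = ⊤)
    (pstar : ℝ)
    (hp : pstar = ⨅ ϑ : ℝ, ((gaussianReal ϑ (Real.toNNReal (ς ^ 2))) T).toReal)
    (α : ℝ) (hα : α ∈ Set.Ioo (0 : ℝ) 1) (L U : ℝ → ℝ)
    (hL : ∀ w ∈ T, truncNormalCDF ς T (L w) w = 1 - α / 2)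
    (hU : ∀ w ∈ T, truncNormalCDF ς T (U w) w = α / 2)
    (w : ℝ) (hw : w ∈ T) :
    (U w - L w) / ς ≤ 2 * stdNormalCDFInv (1 - pstar * (α / 2)) := by
  obtain ⟨hα0, hα1⟩ := hα
  set v : NNReal := Real.toNNReal (ς ^ 2) with hv
  have hTmeas : MeasurableSet T := by
    rw [hT]
    refine MeasurableSet.biUnion (Finset.range K).countable_toSet fun i _ => ?_
    exact ((isOpen_Ioo (a := a i) (b := b i)).preimage continuous_coe_real_ereal).measurableSet
  -- lower bound on the truncation probability
  obtain ⟨m, hm0, hm⟩ := exists_lb hς K hK a b hab T hT ha1 hbK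
  -- pstar facts
  have hbdd : BddBelow (range fun θ : ℝ => ((gaussianReal θ v) T).toReal) := by
    refine ⟨0, ?_⟩
    rintro _ ⟨θ, rfl⟩
    exact ENNReal.toReal_nonneg
  have hpm : m ≤ pstar := by
    rw [hp]
    exact le_ciInf hm
  have hple : ∀ θ : ℝ, pstar ≤ ((gaussianReal θ v) T).toReal := by
    intro θ
    rw [hp]
    exact ciInf_le hbdd θ
  have hp0 : 0 < pstar := lt_of_lt_of_le hm0 hpm
  have hp1 : pstar ≤ 1 := by
    refine le_trans (hple 0) ?_
    have h1 : ((gaussianReal 0 v) T).toReal ≤ ((gaussianReal 0 v) univ).toReal :=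
      ENNReal.toReal_mono (measure_ne_top _ _) (measure_mono (subset_univ T))
    simpa using h1
  set q : ℝ := pstar * (α / 2) with hq
  have hq0 : 0 < q := by positivity
  have hq1 : q < 1 := by nlinarith
  obtain ⟨c₀, hc₀⟩ := stdNormalCDF_surj ⟨hq0, hq1⟩
  have hInv : stdNormalCDFInv (1 - pstar * (α / 2)) = -c₀ := by
    have h1 : stdNormalCDF (-c₀) = 1 - q := by rw [stdNormalCDF_symm, hc₀]
    rw [stdNormalCDFInv, show (1 : ℝ) - pstar * (α / 2) = 1 - q from rfl, ← h1]
    exact Function.leftInverse_invFun stdNormalCDF_strictMono.injective (-c₀)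
  -- U bound
  have hUb : c₀ ≤ (w - U w) / ς := by
    have hEq := hU w hw
    rw [truncNormalCDF] at hEq
    set DU : ℝ := ((gaussianReal (U w) v) T).toReal with hDU
    have hDU0 : 0 < DU := lt_of_lt_of_le hm0 (hm (U w))
    have hnum : ((gaussianReal (U w) v) (Iic w ∩ T)).toReal = α / 2 * DU := by
      field_simp at hEq
      linarith [hEq]
    have hle2 : ((gaussianReal (U w) v) (Iic w ∩ T)).toReal
        ≤ ((gaussianReal (U w) v) (Iic w)).toReal :=
      ENNReal.toReal_mono (measure_ne_top _ _) (measure_mono inter_subset_left)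
    rw [gauss_Iic hς, hnum] at hle2
    have hq_le : q ≤ stdNormalCDF ((w - U w) / ς) := by
      have : q ≤ α / 2 * DU := by
        rw [hq]
        nlinarith [hple (U w)]
      linarith
    rw [← hc₀] at hq_le
    exact stdNormalCDF_strictMono.le_iff_le.mp hq_le
  -- L bound
  have hLb : c₀ ≤ (L w - w) / ς := by
    have hEq := hL w hw
    rw [truncNormalCDF] at hEq
    set DL : ℝ := ((gaussianReal (L w) v) T).toReal with hDL
    have hDL0 : 0 < DL := lt_of_lt_of_le hm0 (hm (L w))
    have hnum : ((gaussianReal (L w) v) (Iic w ∩ T)).toReal = (1 - α / 2) * DL := by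
      field_simp at hEq
      linarith [hEq]
    have hsplit : DL = ((gaussianReal (L w) v) (Iic w ∩ T)).toReal
        + ((gaussianReal (L w) v) (Ioi w ∩ T)).toReal := by
      rw [hDL, ← ENNReal.toReal_add (measure_ne_top _ _) (measure_ne_top _ _),
        ← measure_union (Disjoint.mono inter_subset_left inter_subset_left
          (Iic_disjoint_Ioi le_rfl)) (measurableSet_Ioi.inter hTmeas)]
      congr 1
      rw [← union_inter_distrib_right, Iic_union_Ioi, univ_inter]
    have hle2 : ((gaussianReal (L w) v) (Ioi w ∩ T)).toReal
        ≤ ((gaussianReal (L w) v) (Ioi w)).toReal :=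
      ENNReal.toReal_mono (measure_ne_top _ _) (measure_mono inter_subset_left)
    rw [gauss_Ioi hς] at hle2
    have hq_le : q ≤ stdNormalCDF ((L w - w) / ς) := by
      have h3 : ((gaussianReal (L w) v) (Ioi w ∩ T)).toReal = α / 2 * DL := by
        rw [hnum] at hsplit
        linarith
      have : q ≤ α / 2 * DL := by
        rw [hq]
        nlinarith [hple (L w)]
      linarith
    rw [← hc₀] at hq_le
    exact stdNormalCDF_strictMono.le_iff_le.mp hq_le
  rw [hInv]
  have hkey : (U w - L w) / ς = -((w - U w) / ς) - (L w - w) / ς := by ring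
  rw [hkey]
  linarith
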